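/- If R is a weakly strongly 2-nil-clean ring, then 30 is a nilpotent element of R. -/

import Mathlib

/-- A ring is weakly strongly 2-nil-clean if every element is `±e ± f + n` with
`e, f` idempotents and `n` nilpotent, all commuting with each other. -/
def IsWeaklyStrongly2NilClean (R : Type*) [Ring R] : Prop :=
  ∀ a : R, ∃ e f n : R, IsIdempotentElem e ∧ IsIdempotentElem f ∧ IsNilpotent n ∧
    Commute e f ∧ Commute e n ∧ Commute f n ∧
    (a = e + f + n ∨ a = e - f + n ∨ a = -e + f + n ∨ a = -e - f + n)

/-- A ring is strongly 2-nil-clean if every element is `e + f + n` with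
`e, f` idempotents and `n` nilpotent, all commuting with each other. -/
def IsStrongly2NilClean (R : Type*) [Ring R] : Prop :=
  ∀ a : R, ∃ e f n : R, IsIdempotentElem e ∧ IsIdempotentElem f ∧ IsNilpotent n ∧
    Commute e f ∧ Commute e n ∧ Commute f n ∧ a = e + f + n

/-- Key computation in a commutative ring: if `E, F` are idempotent and
`3 = ±E ± F + N`, then `120 = N * (polynomial in N)`. -/
lemma wsnc_key_eq {S : Type*} [CommRing S] (E F N : S) (hE : E * E = E) (hF : F * F = F)
    (hcase : (3 : S) = E + F + N ∨ (3 : S) = E - F + N ∨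
      (3 : S) = -E + F + N ∨ (3 : S) = -E - F + N) :
    (120 : S) = N * (274 - 225*N + 85*N^2 - 15*N^3 + N^4) := by
  have hq : ((3 : S) - N) * ((2 : S) - N) * ((4 : S) - N) * ((1 : S) - N) * ((5 : S) - N) = 0 := by
    rcases hcase with h | h | h | h
    · have hN : N = 3 - E - F := by linear_combination -h
      rw [hN]
      linear_combination (-4 - 10*F + 10*F^2 + 10*F^3 - 4*E + 5*E*F + 10*E*F^2
          + E^2 + 5*E^2*F + E^3) * hE
        + (-4 - 4*F + F^2 + F^3 + 10*E + 15*E*F + 5*E*F^2) * hF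
    · have hN : N = 3 - E + F := by linear_combination -h
      rw [hN]
      linear_combination (-4 + 10*F + 10*F^2 - 10*F^3 - 4*E - 5*E*F + 10*E*F^2
          + E^2 - 5*E^2*F + E^3) * hE
        + (4 + 4*F - F^2 - F^3 - 10*E - 5*E*F + 5*E*F^2) * hF
    · have hN : N = 3 + E - F := by linear_combination -h
      rw [hN]
      linear_combination (4 - 10*F - 10*F^2 + 10*F^3 + 4*E + 5*E*F - 10*E*F^2
          - E^2 + 5*E^2*F - E^3) * hE
        + (-4 - 4*F + F^2 + F^3 + 10*E + 5*E*F - 5*E*F^2) * hF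
    · have hN : N = 3 + E + F := by linear_combination -h
      rw [hN]
      linear_combination (4 + 10*F - 10*F^2 - 10*F^3 + 4*E - 5*E*F - 10*E*F^2
          - E^2 - 5*E^2*F - E^3) * hE
        + (4 + 4*F - F^2 - F^3 - 10*E - 15*E*F - 5*E*F^2) * hF
  linear_combination hq

theorem thirty_nilpotent_of_wsnc {R : Type*} [Ring R]
    (hR : IsWeaklyStrongly2NilClean R) : IsNilpotent (30 : R) := by
  obtain ⟨e, f, n, he, hf, hn, hef, hen, hfn, hcase⟩ := hR 3
  have hcomm : ∀ x ∈ ({e, f, n} : Set R), ∀ y ∈ ({e, f, n} : Set R), x * y = y * x := by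
    intro x hx y hy
    rcases hx with rfl | rfl | rfl <;> rcases hy with rfl | rfl | rfl
    · rfl
    · exact hef
    · exact hen
    · exact hef.symm
    · rfl
    · exact hfn
    · exact hen.symm
    · exact hfn.symm
    · rfl
  letI : CommRing (Subring.closure ({e, f, n} : Set R)) := Subring.closureCommRingOfComm hcomm
  have heS : e ∈ Subring.closure ({e, f, n} : Set R) := Subring.subset_closure (by simp)
  have hfS : f ∈ Subring.closure ({e, f, n} : Set R) := Subring.subset_closure (by simp)
  have hnS : n ∈ Subring.closure ({e, f, n} : Set R) := Subring.subset_closure (by simp)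
  have keyT := wsnc_key_eq (S := Subring.closure ({e, f, n} : Set R))
    ⟨e, heS⟩ ⟨f, hfS⟩ ⟨n, hnS⟩
    (Subtype.ext ((by with_unfolding_all rfl :
      ((⟨e, heS⟩ * ⟨e, heS⟩ : Subring.closure ({e, f, n} : Set R)) : R) = e * e).trans he.eq))
    (Subtype.ext ((by with_unfolding_all rfl :
      ((⟨f, hfS⟩ * ⟨f, hfS⟩ : Subring.closure ({e, f, n} : Set R)) : R) = f * f).trans hf.eq))
    (by
      rcases hcase with h | h | h | h
      · exact Or.inl (Subtype.ext (by with_unfolding_all exact h))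
      · exact Or.inr (Or.inl (Subtype.ext (by with_unfolding_all exact h)))
      · exact Or.inr (Or.inr (Or.inl (Subtype.ext (by with_unfolding_all exact h))))
      · exact Or.inr (Or.inr (Or.inr (Subtype.ext (by with_unfolding_all exact h)))))
  have keyR : (120 : R) = n * (274 - 225*n + 85*n^2 - 15*n^3 + n^4) := by
    with_unfolding_all exact congrArg Subtype.val keyT
  have hcn : Commute n (274 - 225*n + 85*n^2 - 15*n^3 + n^4) := by
    show n * _ = _ * n
    noncomm_ring
  have h120 : IsNilpotent (120 : R) := by
    rw [keyR]
    exact hcn.isNilpotent_mul_right hn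
  obtain ⟨k, hk⟩ := h120
  refine ⟨3 * k, ?_⟩
  have h30 : (30 : R) ^ 3 = 225 * 120 := by norm_num
  have hc : Commute (225 : R) (120 : R) := by norm_num [Commute, SemiconjBy]
  rw [pow_mul, h30, hc.mul_pow, hk, mul_zero]
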